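/- Let A, B ∈ ℂ^{n×n} and for θ ∈ ℝ set Δ_θ = A + B·e^{−iθ}. If sup_{θ∈[0,2π]} ρ(Δ_θ) < 1, where ρ denotes the spectral radius, then there exists a positive integer k* such that for all k ≥ k*, sup_{θ∈[0,2π]} ‖Δ_θ^k‖ < 1, where ‖·‖ is the operator (spectral) norm. -/

import Mathlib

open Matrix Complex

lemma clm_norm_pow_le {n : ℕ} (x : EuclideanSpace ℂ (Fin n) →L[ℂ] EuclideanSpace ℂ (Fin n))
    (q : ℕ) : ‖x ^ q‖ ≤ ‖x‖ ^ q := by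
  induction q with
  | zero =>
    rw [pow_zero, pow_zero, ContinuousLinearMap.one_def]
    exact ContinuousLinearMap.norm_id_le
  | succ q ih =>
    rw [pow_succ, pow_succ]
    calc ‖x ^ q * x‖ ≤ ‖x ^ q‖ * ‖x‖ := norm_mul_le _ _
    _ ≤ ‖x‖ ^ q * ‖x‖ := mul_le_mul_of_nonneg_right ih (norm_nonneg x)

lemma exists_pow_norm_lt {n : ℕ} (x : EuclideanSpace ℂ (Fin n) →L[ℂ] EuclideanSpace ℂ (Fin n))
    {c : ℝ} (hc : 0 < c) (hx : spectralRadius ℂ x < ENNReal.ofReal c) :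
    ∃ k, 1 ≤ k ∧ ‖x ^ k‖ < c ^ k := by
  have h := spectrum.pow_norm_pow_one_div_tendsto_nhds_spectralRadius x
  have h2 : ∀ᶠ k : ℕ in Filter.atTop,
      ENNReal.ofReal (‖x ^ k‖ ^ (1 / (k : ℝ))) < ENNReal.ofReal c :=
    h.eventually_lt_const hx
  obtain ⟨k, hk2, hk1⟩ := (h2.and (Filter.eventually_ge_atTop 1)).exists
  refine ⟨k, hk1, ?_⟩
  have hk0 : (k : ℝ) ≠ 0 := Nat.cast_ne_zero.mpr (by omega)
  have hy : ‖x ^ k‖ ^ (1 / (k : ℝ)) < c := (ENNReal.ofReal_lt_ofReal_iff hc).mp hk2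
  have hy0 : 0 ≤ ‖x ^ k‖ ^ (1 / (k : ℝ)) := Real.rpow_nonneg (norm_nonneg _) _
  have key : (‖x ^ k‖ ^ (1 / (k : ℝ))) ^ k = ‖x ^ k‖ := by
    rw [← Real.rpow_natCast (‖x ^ k‖ ^ (1 / (k : ℝ))) k, ← Real.rpow_mul (norm_nonneg _)]
    rw [one_div_mul_cancel hk0, Real.rpow_one]
  calc ‖x ^ k‖ = (‖x ^ k‖ ^ (1 / (k : ℝ))) ^ k := key.symm
  _ < c ^ k := pow_lt_pow_left₀ hy hy0 (by omega)

theorem stmt1 {n : ℕ} (A B : Matrix (Fin n) (Fin n) ℂ)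
    (h : ∃ r : ℝ, r < 1 ∧ ∀ θ ∈ Set.Icc (0 : ℝ) (2 * Real.pi),
      ∀ μ ∈ spectrum ℂ (A + Complex.exp (-(θ : ℂ) * Complex.I) • B), ‖μ‖ ≤ r) :
    ∃ kstar : ℕ, 1 ≤ kstar ∧ ∀ k ≥ kstar, ∃ s : ℝ, s < 1 ∧
      ∀ θ ∈ Set.Icc (0 : ℝ) (2 * Real.pi),
        ‖Matrix.toEuclideanCLM (𝕜 := ℂ)
          ((A + Complex.exp (-(θ : ℂ) * Complex.I) • B) ^ k)‖ ≤ s := by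
  obtain ⟨r, hr1, hr⟩ := h
  set K := Set.Icc (0 : ℝ) (2 * Real.pi) with hK_def
  have hK : IsCompact K := isCompact_Icc
  set c : ℝ := (max r 0 + 1) / 2 with hc_def
  have hc0 : 0 < c := by
    have : (0:ℝ) ≤ max r 0 := le_max_right _ _
    simp only [hc_def]; linarith
  have hmax1 : max r 0 < 1 := max_lt hr1 one_pos
  have hc1 : c < 1 := by simp only [hc_def]; linarith
  have hrc : max r 0 < c := by simp only [hc_def]; linarith
  -- the matrix family and CLM family
  set f : ℝ → Matrix (Fin n) (Fin n) ℂ :=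
    fun θ => A + Complex.exp (-(θ : ℂ) * Complex.I) • B with hf_def
  set g : ℝ → (EuclideanSpace ℂ (Fin n) →L[ℂ] EuclideanSpace ℂ (Fin n)) :=
    fun θ => Matrix.toEuclideanCLM (𝕜 := ℂ) (f θ) with hg_def
  have hf_cont : Continuous f := by
    apply continuous_const.add
    exact ((Complex.continuous_exp.comp
      ((Complex.continuous_ofReal.neg).mul continuous_const))).smul continuous_const
  have hg_cont : Continuous g := by
    have hL := ((Matrix.toEuclideanCLM (𝕜 := ℂ) (n := Fin n) :
        Matrix (Fin n) (Fin n) ℂ ≃⋆ₐ[ℂ]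
          (EuclideanSpace ℂ (Fin n) →L[ℂ] EuclideanSpace ℂ (Fin n)))
        ).toAlgEquiv.toLinearMap.continuous_of_finiteDimensional
    exact hL.comp hf_cont
  -- spectral radius bound
  have hspec : ∀ θ ∈ K, spectralRadius ℂ (g θ) < ENNReal.ofReal c := by
    intro θ hθ
    have hle : spectralRadius ℂ (g θ) ≤ ENNReal.ofReal (max r 0) := by
      rw [spectralRadius]
      refine iSup₂_le fun μ hμ => ?_
      rw [hg_def] at hμ
      simp only [AlgEquiv.spectrum_eq] at hμ
      have := (hr θ hθ μ hμ).trans (le_max_left r 0)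
      rw [← ENNReal.ofReal_coe_nnreal, coe_nnnorm]
      exact ENNReal.ofReal_le_ofReal this
    exact lt_of_le_of_lt hle ((ENNReal.ofReal_lt_ofReal_iff hc0).mpr hrc)
  -- pointwise Gelfand
  have hpt : ∀ θ, θ ∈ K → ∃ k, 1 ≤ k ∧ ‖g θ ^ k‖ < c ^ k := fun θ hθ =>
    exists_pow_norm_lt (g θ) hc0 (hspec θ hθ)
  choose! kf hkf1 hkf2 using hpt
  -- open cover
  obtain ⟨t, ht_sub, ht_cover⟩ := hK.elim_nhds_subcover
    (fun θ => {θ' | ‖g θ' ^ kf θ‖ < c ^ kf θ}) (fun θ hθ => by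
      refine IsOpen.mem_nhds ?_ (hkf2 θ hθ)
      exact isOpen_lt ((hg_cont.pow _).norm) continuous_const)
  -- uniform norm bound
  obtain ⟨C, hC⟩ := hK.exists_bound_of_continuousOn hg_cont.continuousOn
  set C' : ℝ := max C 1 with hC'_def
  have hC'1 : 1 ≤ C' := le_max_right _ _
  have hC'0 : 0 < C' := lt_of_lt_of_le one_pos hC'1
  have hgC' : ∀ θ ∈ K, ‖g θ‖ ≤ C' := fun θ hθ => (hC θ hθ).trans (le_max_left _ _)
  set N : ℕ := t.sup kf with hN_def
  set D : ℝ := (C' / c) ^ N with hD_def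
  have hCc1 : 1 ≤ C' / c := by
    rw [le_div_iff₀ hc0]; nlinarith
  have hD1 : 1 ≤ D := by rw [hD_def]; exact one_le_pow₀ hCc1
  have hD0 : 0 < D := lt_of_lt_of_le one_pos hD1
  -- key uniform bound for all k
  have key : ∀ k, ∀ θ ∈ K, ‖g θ ^ k‖ ≤ c ^ k * D := by
    intro k θ hθ
    obtain ⟨i, hi, hθi⟩ := Set.mem_iUnion₂.mp (ht_cover hθ)
    set m : ℕ := kf i with hm_def
    have hm1 : 1 ≤ m := hkf1 i (ht_sub i hi)
    have hmN : m ≤ N := Finset.le_sup hi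
    have hθi' : ‖g θ ^ m‖ < c ^ m := hθi
    set q : ℕ := k / m
    set s : ℕ := k % m
    have hsm : s < m := Nat.mod_lt _ (by omega)
    have hsN : s ≤ N := le_trans (le_of_lt hsm) hmN
    have hdecomp : m * q + s = k := Nat.div_add_mod k m
    have h1 : ‖g θ ^ k‖ ≤ ‖g θ ^ m‖ ^ q * ‖g θ‖ ^ s := by
      rw [← hdecomp, pow_add, pow_mul]
      calc ‖(g θ ^ m) ^ q * g θ ^ s‖ ≤ ‖(g θ ^ m) ^ q‖ * ‖g θ ^ s‖ := norm_mul_le _ _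
      _ ≤ ‖g θ ^ m‖ ^ q * ‖g θ‖ ^ s := by
          apply mul_le_mul (clm_norm_pow_le _ _) (clm_norm_pow_le _ _) (norm_nonneg _)
          positivity
    have h2 : ‖g θ ^ m‖ ^ q * ‖g θ‖ ^ s ≤ (c ^ m) ^ q * C' ^ s := by
      apply mul_le_mul (pow_le_pow_left₀ (norm_nonneg _) hθi'.le q)
        (pow_le_pow_left₀ (norm_nonneg _) (hgC' θ hθ) s) (by positivity) (by positivity)
    have h3 : (c ^ m) ^ q * C' ^ s = c ^ k * (C' / c) ^ s := by
      rw [← hdecomp, ← pow_mul, pow_add, div_pow]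
      field_simp
      rw [← mul_pow, mul_div_cancel₀ _ hc0.ne']
    have h4 : (C' / c) ^ s ≤ D := pow_le_pow_right₀ hCc1 hsN
    calc ‖g θ ^ k‖ ≤ (c ^ m) ^ q * C' ^ s := le_trans h1 h2
    _ = c ^ k * (C' / c) ^ s := h3
    _ ≤ c ^ k * D := by
        apply mul_le_mul_of_nonneg_left h4 (by positivity)
  -- choose kstar
  obtain ⟨k0, hk0⟩ := exists_pow_lt_of_lt_one (show (0:ℝ) < 1 / D by positivity) hc1
  refine ⟨max k0 1, le_max_right _ _, fun k hk => ?_⟩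
  refine ⟨c ^ k * D, ?_, fun θ hθ => ?_⟩
  · have hck : c ^ k ≤ c ^ k0 :=
      pow_le_pow_of_le_one hc0.le hc1.le (le_trans (le_max_left _ _) hk)
    calc c ^ k * D ≤ c ^ k0 * D := mul_le_mul_of_nonneg_right hck hD0.le
    _ < (1 / D) * D := mul_lt_mul_of_pos_right hk0 hD0
    _ = 1 := by field_simp
  · have : (Matrix.toEuclideanCLM (𝕜 := ℂ) ((f θ) ^ k)) = g θ ^ k := by
      rw [hg_def, map_pow]
    rw [hf_def] at this
    rw [this]
    exact key k θ hθ
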